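/- There exist universal constants C₁, C₂ > 0 such that the following holds. Let a < b be real numbers and let Z be a random continuous function on [a,b] (a measurable map from a probability space to C([a,b],ℝ) with the uniform topology) such that for all s, t ∈ [a,b] and all K ≥ 1: P(|Z(t) − Z(s)| > K|t − s|^{1/2}) ≤ √e · K · e^{−K²/2}. Then for every K ≥ 0: P( sup_{t,s ∈ [a,b], t ≠ s} |Z(t) − Z(s)| / √(|t − s| · log(2(b − a)/|t − s|)) > K ) ≤ C₁ e^{−C₂ K²}. -/

import Mathlib

open MeasureTheory Finset

noncomputable def mcR : ℝ := (Real.sqrt (Real.sqrt 2))⁻¹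

lemma sqrt_sqrt_two_pos : 0 < Real.sqrt (Real.sqrt 2) := by positivity

lemma mcR_pos : 0 < mcR := by unfold mcR; positivity

lemma mcR_le : mcR ≤ 6/7 := by
  have h1 : (7/6 : ℝ) ≤ Real.sqrt (Real.sqrt 2) := by
    have h2 : (49/36 : ℝ) ≤ Real.sqrt 2 := by
      nlinarith [Real.sq_sqrt (by norm_num : (0:ℝ) ≤ 2), Real.sqrt_nonneg (2:ℝ)]
    nlinarith [Real.sq_sqrt (le_trans (by norm_num) h2), Real.sqrt_nonneg (Real.sqrt 2)]
  rw [mcR, inv_le_comm₀ sqrt_sqrt_two_pos (by norm_num)]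
  linarith

lemma geom_bound (J : ℕ) : ∑ j ∈ Finset.range J, mcR ^ j ≤ 7 := by
  have h := mcR_le
  have h0 := mcR_pos
  calc ∑ j ∈ Finset.range J, mcR ^ j ≤ ∑ j ∈ Finset.range J, (6/7:ℝ) ^ j :=
        Finset.sum_le_sum (fun i _ => pow_le_pow_left₀ h0.le h i)
    _ ≤ ∑' j : ℕ, (6/7:ℝ) ^ j :=
        Summable.sum_le_tsum _ (fun i _ => by positivity)
          (summable_geometric_of_lt_one (by norm_num) (by norm_num))
    _ = 7 := by rw [tsum_geometric_of_lt_one (by norm_num) (by norm_num)]; norm_num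

noncomputable def mcPhi (L : ℝ) (n : ℕ) : ℝ := Real.sqrt (L / 2^n * ((n+1) * Real.log 2))

lemma mcPhi_nonneg (L : ℝ) (n : ℕ) : 0 ≤ mcPhi L n := Real.sqrt_nonneg _

lemma mcPhi_succ_le (L : ℝ) (hL : 0 ≤ L) (n : ℕ) : mcPhi L (n+1) ≤ mcPhi L n := by
  apply Real.sqrt_le_sqrt
  have hl2 : 0 ≤ Real.log 2 := Real.log_nonneg (by norm_num)
  rw [div_mul_eq_mul_div, div_mul_eq_mul_div,
    div_le_div_iff₀ (by positivity) (by positivity : (0:ℝ) < 2^n)]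
  push_cast
  rw [pow_succ]
  nlinarith [mul_nonneg (mul_nonneg (mul_nonneg hL hl2) (pow_pos (by norm_num : (0:ℝ) < 2) n).le) (Nat.cast_nonneg (α := ℝ) n)]

lemma mcPhi_ratio (L : ℝ) (hL : 0 ≤ L) (n j : ℕ) :
    mcPhi L (n+j) ≤ 2 * mcPhi L n * mcR ^ j := by
  have hl2 : 0 ≤ Real.log 2 := Real.log_nonneg (by norm_num)
  have hA' : 0 ≤ L / 2^n * ((n+1) * Real.log 2) := by positivity
  have hB : 0 ≤ 2 * mcPhi L n * mcR ^ j := by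
    have := mcPhi_nonneg L n; have := mcR_pos; positivity
  rw [mcPhi]
  calc Real.sqrt (L / 2^(n+j) * ((↑(n+j)+1) * Real.log 2))
      ≤ Real.sqrt ((2 * mcPhi L n * mcR ^ j)^2) := by
        apply Real.sqrt_le_sqrt
        have hr2 : mcR ^ 2 = (Real.sqrt 2)⁻¹ := by
          rw [mcR, inv_pow, Real.sq_sqrt (Real.sqrt_nonneg 2)]
        have hexp : (2 * mcPhi L n * mcR ^ j)^2
            = 4 * (L / 2^n * ((n+1) * Real.log 2)) * ((Real.sqrt 2)^j)⁻¹ := by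
          have h1 : (2 * mcPhi L n * mcR ^ j)^2 = 4 * (mcPhi L n)^2 * (mcR^2)^j := by ring
          rw [h1, mcPhi, Real.sq_sqrt hA', hr2, ← inv_pow]
        rw [hexp]
        have hspos : (0:ℝ) < (Real.sqrt 2)^j := by positivity
        have hs2 : ((Real.sqrt 2)^j)^2 = 2^j := by
          rw [← pow_mul, mul_comm j 2, pow_mul, Real.sq_sqrt (by norm_num : (0:ℝ) ≤ 2)]
        have hbern : (1:ℝ) + j * (2/5) ≤ (Real.sqrt 2)^j := by
          have h14 : (1.4:ℝ) ≤ Real.sqrt 2 := by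
            nlinarith [Real.sq_sqrt (by norm_num : (0:ℝ) ≤ 2), Real.sqrt_nonneg (2:ℝ)]
          calc (1:ℝ) + j * (2/5) = 1 + (j:ℝ) * (1.4 - 1) := by norm_num
            _ ≤ (1.4:ℝ)^j := by
                have := one_add_mul_le_pow (by norm_num : (-2:ℝ) ≤ 1.4 - 1) j
                linarith [this]
            _ ≤ (Real.sqrt 2)^j := pow_le_pow_left₀ (by norm_num) h14 j
        have hkey : ((n:ℝ)+(j:ℝ)+1) ≤ 4 * ((n:ℝ)+1) * (Real.sqrt 2)^j := by
          nlinarith [hbern, Nat.cast_nonneg (α := ℝ) n, Nat.cast_nonneg (α := ℝ) j]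
        have h2n : (0:ℝ) < 2^n := by positivity
        have h2j : (0:ℝ) < 2^j := by positivity
        have hLl : 0 ≤ L * Real.log 2 := mul_nonneg hL hl2
        rw [pow_add, ← sub_nonneg]
        push_cast
        have expand : 4 * (L / 2 ^ n * ((↑n + 1) * Real.log 2)) * ((Real.sqrt 2)^j)⁻¹
              - L / (2 ^ n * 2 ^ j) * ((↑n + ↑j + 1) * Real.log 2)
            = (L * Real.log 2) / (2^n * 2^j * (Real.sqrt 2)^j) *
              (4 * ((n:ℝ)+1) * 2^j - ((n:ℝ)+(j:ℝ)+1) * (Real.sqrt 2)^j) := by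
          field_simp
        rw [expand]
        have h0 : (0:ℝ) ≤ 4 * ((n:ℝ)+1) * 2^j - ((n:ℝ)+(j:ℝ)+1) * (Real.sqrt 2)^j := by
          nlinarith [mul_le_mul_of_nonneg_right hkey hspos.le, hs2]
        exact mul_nonneg (by positivity) h0
    _ = 2 * mcPhi L n * mcR ^ j := Real.sqrt_sq hB

open Filter

noncomputable def mcK (a b t : ℝ) (m : ℕ) : ℕ := ⌊(t - a)/(b - a) * 2^m⌋₊
noncomputable def mcU (a b t : ℝ) (m : ℕ) : ℝ := a + mcK a b t m * ((b-a)/2^m)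

section grid
variable {a b t : ℝ} (hab : a < b) (ht : t ∈ Set.Icc a b)
include hab ht

lemma theta_nonneg (m : ℕ) : 0 ≤ (t - a)/(b - a) * 2^m := by
  have := ht.1
  have : (0:ℝ) ≤ (t-a)/(b-a) := div_nonneg (by linarith) (by linarith)
  positivity

lemma mcK_le_pow (m : ℕ) : mcK a b t m ≤ 2^m := by
  have h1 : (t - a)/(b - a) ≤ 1 := div_le_one_of_le₀ (by linarith [ht.2]) (by linarith)
  have h2 : (t - a)/(b - a) * 2^m ≤ ((2^m : ℕ) : ℝ) := by
    push_cast
    nlinarith [pow_pos (by norm_num : (0:ℝ) < 2) m]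
  calc mcK a b t m ≤ ⌊((2^m : ℕ) : ℝ)⌋₊ := Nat.floor_mono h2
    _ = 2^m := Nat.floor_natCast _

lemma mcU_le (m : ℕ) : mcU a b t m ≤ t := by
  have hb : (0:ℝ) < b - a := by linarith
  have h2m : (0:ℝ) < 2^m := by positivity
  have h1 : (mcK a b t m : ℝ) ≤ (t - a)/(b - a) * 2^m := Nat.floor_le (theta_nonneg hab ht m)
  have : (mcK a b t m : ℝ) * ((b-a)/2^m) ≤ (t - a)/(b - a) * 2^m * ((b-a)/2^m) :=
    mul_le_mul_of_nonneg_right h1 (by positivity)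
  rw [mcU]
  calc a + (mcK a b t m : ℝ) * ((b-a)/2^m) ≤ a + (t - a)/(b - a) * 2^m * ((b-a)/2^m) := by linarith
    _ = t := by field_simp; ring

lemma lt_mcU_add (m : ℕ) : t < mcU a b t m + (b-a)/2^m := by
  have hb : (0:ℝ) < b - a := by linarith
  have h2m : (0:ℝ) < 2^m := by positivity
  have h1 : (t - a)/(b - a) * 2^m < (mcK a b t m : ℝ) + 1 := Nat.lt_floor_add_one _
  have h2 : (t - a)/(b - a) * 2^m * ((b-a)/2^m) < ((mcK a b t m : ℝ) + 1) * ((b-a)/2^m) :=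
    mul_lt_mul_of_pos_right h1 (by positivity)
  have h3 : (t - a)/(b - a) * 2^m * ((b-a)/2^m) = t - a := by field_simp
  rw [mcU]; nlinarith
lemma mcU_mem (m : ℕ) : mcU a b t m ∈ Set.Icc a b := by
  constructor
  · rw [mcU]
    have : (0:ℝ) ≤ (mcK a b t m : ℝ) * ((b-a)/2^m) := by
      have hb : (0:ℝ) < b - a := by linarith
      positivity
    linarith
  · exact le_trans (mcU_le hab ht m) ht.2

lemma mcK_succ (m : ℕ) : mcK a b t (m+1) = 2 * mcK a b t m ∨
    mcK a b t (m+1) = 2 * mcK a b t m + 1 := by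
  have hθ := theta_nonneg hab ht m
  have low : 2 * mcK a b t m ≤ mcK a b t (m+1) := by
    apply Nat.le_floor
    have h1 : (mcK a b t m : ℝ) ≤ (t - a)/(b - a) * 2^m := Nat.floor_le hθ
    push_cast
    rw [pow_succ]
    nlinarith
  have high : mcK a b t (m+1) < 2 * mcK a b t m + 2 := by
    rw [mcK]
    apply Nat.floor_lt (theta_nonneg hab ht (m+1)) |>.mpr
    have h1 : (t - a)/(b - a) * 2^m < (mcK a b t m : ℝ) + 1 := Nat.lt_floor_add_one _
    push_cast
    rw [pow_succ]
    nlinarith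
  omega

lemma mcU_tendsto : Tendsto (fun m => mcU a b t m) atTop (nhds t) := by
  have hb : (0:ℝ) < b - a := by linarith
  have h1 : Tendsto (fun m : ℕ => (b-a)/2^m) atTop (nhds 0) := by
    have := tendsto_pow_atTop_nhds_zero_of_lt_one (by norm_num : (0:ℝ) ≤ 1/2) (by norm_num)
    have h2 := this.const_mul (b - a)
    rw [mul_zero] at h2
    convert h2 using 2 with m
    rw [div_pow, one_pow, mul_one_div]
  have key : Tendsto (fun m => t - (b-a)/2^m) atTop (nhds (t - 0)) := tendsto_const_nhds.sub h1
  rw [sub_zero] at key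
  apply tendsto_of_tendsto_of_tendsto_of_le_of_le key tendsto_const_nhds
  · intro m; linarith [lt_mcU_add hab ht m]
  · intro m; simpa using mcU_le hab ht m

end grid

lemma tail_bound {a b : ℝ} (hab : a < b) (f : ℝ → ℝ)
    (hf : ContinuousOn f (Set.Icc a b)) {M : ℝ} (hM : 0 ≤ M)
    (H : ∀ n k : ℕ, k < 2^n →
      |f (a + ((k:ℝ)+1) * ((b-a)/2^n)) - f (a + (k:ℝ) * ((b-a)/2^n))| ≤ M * mcPhi (b-a) n)
    {t : ℝ} (ht : t ∈ Set.Icc a b) (n : ℕ) :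
    |f t - f (mcU a b t n)| ≤ 14 * M * mcPhi (b-a) n := by
  have hL : (0:ℝ) ≤ b - a := by linarith
  -- step bound
  have step : ∀ m : ℕ, |f (mcU a b t (m+1)) - f (mcU a b t m)| ≤ M * mcPhi (b-a) (m+1) := by
    intro m
    rcases mcK_succ hab ht m with hk | hk
    · have : mcU a b t (m+1) = mcU a b t m := by
        rw [mcU, mcU, hk]
        push_cast
        rw [pow_succ]
        field_simp
      rw [this, sub_self, abs_zero]
      exact mul_nonneg hM (mcPhi_nonneg _ _)
    · have hlt : 2 * mcK a b t m < 2^(m+1) := by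
        have := mcK_le_pow hab ht (m+1)
        omega
      have happ := H (m+1) (2 * mcK a b t m) hlt
      have e1 : mcU a b t (m+1) = a + ((↑(2 * mcK a b t m):ℝ)+1) * ((b-a)/2^(m+1)) := by
        rw [mcU, hk]; push_cast; ring
      have e2 : mcU a b t m = a + ((2 * mcK a b t m : ℕ):ℝ) * ((b-a)/2^(m+1)) := by
        rw [mcU]; push_cast; rw [pow_succ]; field_simp
      rw [e1, e2]
      exact happ
  -- telescoping
  have tele : ∀ J : ℕ, |f (mcU a b t (n+J)) - f (mcU a b t n)| ≤ 14 * M * mcPhi (b-a) n := by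
    intro J
    calc |f (mcU a b t (n+J)) - f (mcU a b t n)|
        = |∑ i ∈ Finset.range J, (f (mcU a b t (n+(i+1))) - f (mcU a b t (n+i)))| := by
          rw [Finset.sum_range_sub (fun i => f (mcU a b t (n+i)))]
          norm_num
      _ ≤ ∑ i ∈ Finset.range J, |f (mcU a b t (n+(i+1))) - f (mcU a b t (n+i))| :=
          Finset.abs_sum_le_sum_abs _ _
      _ ≤ ∑ i ∈ Finset.range J, M * (2 * mcPhi (b-a) n * mcR ^ i) := by
          apply Finset.sum_le_sum
          intro i _
          calc |f (mcU a b t (n+(i+1))) - f (mcU a b t (n+i))| ≤ M * mcPhi (b-a) (n+i+1) :=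
                step (n+i)
            _ ≤ M * (2 * mcPhi (b-a) n * mcR ^ i) := by
                apply mul_le_mul_of_nonneg_left _ hM
                have hrat := mcPhi_ratio (b-a) hL (n+1) i
                rw [show (n+1)+i = n+i+1 by omega] at hrat
                calc mcPhi (b-a) (n+i+1) ≤ 2 * mcPhi (b-a) (n+1) * mcR ^ i := hrat
                  _ ≤ 2 * mcPhi (b-a) n * mcR ^ i := by
                      have := mcPhi_succ_le (b-a) hL n
                      nlinarith [pow_pos mcR_pos i]
      _ = M * (2 * mcPhi (b-a) n) * ∑ i ∈ Finset.range J, mcR ^ i := by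
          rw [Finset.mul_sum]
          congr 1 with i
          ring
      _ ≤ M * (2 * mcPhi (b-a) n) * 7 := by
          apply mul_le_mul_of_nonneg_left (geom_bound J)
          exact mul_nonneg hM (mul_nonneg (by norm_num) (mcPhi_nonneg _ _))
      _ = 14 * M * mcPhi (b-a) n := by ring
  -- limit
  have hconv : Tendsto (fun J => |f (mcU a b t (n+J)) - f (mcU a b t n)|) atTop
      (nhds (|f t - f (mcU a b t n)|)) := by
    have hg : Tendsto (fun J : ℕ => n + J) atTop atTop :=
      (tendsto_add_atTop_nat n).congr (fun a => Nat.add_comm a n)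
    have h1 : Tendsto (fun J : ℕ => mcU a b t (n+J)) atTop (nhds t) :=
      (mcU_tendsto hab ht).comp hg
    have h2 : Tendsto (fun J : ℕ => f (mcU a b t (n+J))) atTop (nhds (f t)) := by
      apply ((hf t ht).tendsto).comp
      rw [tendsto_nhdsWithin_iff]
      exact ⟨h1, Eventually.of_forall (fun J => mcU_mem hab ht (n+J))⟩
    exact ((h2.sub tendsto_const_nhds).abs)
  exact le_of_tendsto hconv (Eventually.of_forall tele)
lemma chaining {a b : ℝ} (hab : a < b) (f : ℝ → ℝ)
    (hf : ContinuousOn f (Set.Icc a b)) {M : ℝ} (hM : 0 ≤ M)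
    (H : ∀ n k : ℕ, k < 2^n →
      |f (a + ((k:ℝ)+1) * ((b-a)/2^n)) - f (a + (k:ℝ) * ((b-a)/2^n))| ≤ M * mcPhi (b-a) n)
    {t s : ℝ} (ht : t ∈ Set.Icc a b) (hs : s ∈ Set.Icc a b) (hst : s < t) :
    |f t - f s| ≤ 64 * M * Real.sqrt ((t - s) * Real.log (2*(b-a)/(t-s))) := by
  have hb : (0:ℝ) < b - a := by linarith
  have hδ : (0:ℝ) < t - s := by linarith
  have hδL : t - s ≤ b - a := by
    have := ht.2; have := hs.1; linarith
  have hex : ∃ n : ℕ, (b-a)/2^n ≤ t - s := by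
    obtain ⟨n, hn⟩ := pow_unbounded_of_one_lt ((b-a)/(t-s)) (by norm_num : (1:ℝ) < 2)
    exact ⟨n, by rw [div_le_iff₀ (by positivity)] ; rw [div_lt_iff₀ hδ] at hn ; nlinarith⟩
  set n := Nat.find hex with hndef
  have hn : (b-a)/2^n ≤ t - s := Nat.find_spec hex
  have h2 : t - s ≤ 2 * ((b-a)/2^n) := by
    rcases Nat.eq_zero_or_pos n with h0 | hpos
    · rw [h0]
      simp only [pow_zero, div_one]
      linarith
    · obtain ⟨m, hm⟩ := Nat.exists_eq_succ_of_ne_zero hpos.ne'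
      have hmlt : ¬ ((b-a)/2^m ≤ t - s) := Nat.find_min hex (by omega)
      push_neg at hmlt
      have : (b-a)/2^m = 2 * ((b-a)/2^n) := by
        rw [hm, pow_succ]
        field_simp
      linarith
  have hlog2 : (0:ℝ) ≤ Real.log 2 := Real.log_nonneg (by norm_num)
  have hlog : ((n:ℝ) + 1) * Real.log 2 ≤ 2 * Real.log (2*(b-a)/(t-s)) := by
    rcases Nat.eq_zero_or_pos n with h0 | hpos
    · rw [h0]
      have h2le : (2:ℝ) ≤ 2*(b-a)/(t-s) := by
        rw [le_div_iff₀ hδ]; linarith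
      have := Real.log_le_log (by norm_num) h2le
      push_cast
      linarith
    · obtain ⟨m, hm⟩ := Nat.exists_eq_succ_of_ne_zero hpos.ne'
      have hmlt : ¬ ((b-a)/2^m ≤ t - s) := Nat.find_min hex (by omega)
      push_neg at hmlt
      have h2le : (2:ℝ)^n ≤ 2*(b-a)/(t-s) := by
        rw [le_div_iff₀ hδ, hm, pow_succ]
        rw [lt_div_iff₀ (by positivity : (0:ℝ) < 2^m)] at hmlt
        nlinarith
      have hlogle := Real.log_le_log (by positivity) h2le
      rw [Real.log_pow] at hlogle
      have hn1 : (1:ℝ) ≤ (n:ℝ) := by exact_mod_cast hpos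
      nlinarith
  have hlogpos : (0:ℝ) ≤ Real.log (2*(b-a)/(t-s)) := by nlinarith
  have hphi : mcPhi (b-a) n ≤ Real.sqrt 2 * Real.sqrt ((t-s) * Real.log (2*(b-a)/(t-s))) := by
    rw [mcPhi, ← Real.sqrt_mul (by norm_num : (0:ℝ) ≤ 2)]
    apply Real.sqrt_le_sqrt
    calc (b-a)/2^n * (((n:ℝ)+1) * Real.log 2)
        ≤ (t-s) * (2 * Real.log (2*(b-a)/(t-s))) :=
          mul_le_mul hn hlog (by positivity) hδ.le
      _ = 2 * ((t-s) * Real.log (2*(b-a)/(t-s))) := by ring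
  set kt := mcK a b t n with hkt
  set ks := mcK a b s n with hks
  have hksle : ks ≤ kt := by
    apply Nat.floor_mono
    have hts : s - a ≤ t - a := by linarith
    gcongr
  have hh : (0:ℝ) < (b-a)/2^n := by positivity
  have hktle : kt ≤ ks + 2 := by
    have hkth : (kt:ℝ) * ((b-a)/2^n) ≤ t - a := by
      have := mcU_le hab ht n; rw [mcU] at this; linarith
    have hksh : s - a < ((ks:ℝ)+1) * ((b-a)/2^n) := by
      have := lt_mcU_add hab hs n; rw [mcU] at this; linarith
    have hcast : (kt:ℝ) < (ks:ℝ) + 3 := by nlinarith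
    have : kt < ks + 3 := by exact_mod_cast hcast
    omega
  have hmid : |f (mcU a b t n) - f (mcU a b s n)| ≤ 2 * (M * mcPhi (b-a) n) := by
    have hktpow : kt ≤ 2^n := mcK_le_pow hab ht n
    have e : f (mcU a b t n) - f (mcU a b s n)
        = ∑ i ∈ Finset.range (kt - ks),
            (f (a + ((ks+(i+1) : ℕ):ℝ) * ((b-a)/2^n)) - f (a + ((ks+i : ℕ):ℝ) * ((b-a)/2^n))) := by
      rw [Finset.sum_range_sub (fun i => f (a + ((ks+i : ℕ):ℝ) * ((b-a)/2^n))) (kt - ks)]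
      rw [show ks + (kt - ks) = kt by omega, show ks + 0 = ks by omega]
      rfl
    rw [e]
    calc |∑ i ∈ Finset.range (kt - ks),
            (f (a + ((ks+(i+1) : ℕ):ℝ) * ((b-a)/2^n)) - f (a + ((ks+i : ℕ):ℝ) * ((b-a)/2^n)))|
        ≤ ∑ i ∈ Finset.range (kt - ks),
            |f (a + ((ks+(i+1) : ℕ):ℝ) * ((b-a)/2^n)) - f (a + ((ks+i : ℕ):ℝ) * ((b-a)/2^n))| :=
          Finset.abs_sum_le_sum_abs _ _
      _ ≤ ∑ _i ∈ Finset.range (kt - ks), M * mcPhi (b-a) n := by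
          apply Finset.sum_le_sum
          intro i hi
          rw [Finset.mem_range] at hi
          have hki : ks + i < 2^n := by omega
          have happ := H n (ks + i) hki
          have e1 : ((ks+(i+1) : ℕ):ℝ) = ((ks+i : ℕ):ℝ) + 1 := by push_cast; ring
          rw [e1]
          exact happ
      _ = (kt - ks : ℕ) * (M * mcPhi (b-a) n) := by
          rw [Finset.sum_const, Finset.card_range, nsmul_eq_mul]
      _ ≤ 2 * (M * mcPhi (b-a) n) := by
          apply mul_le_mul_of_nonneg_right _ (mul_nonneg hM (mcPhi_nonneg _ _))
          have : (kt - ks : ℕ) ≤ 2 := by omega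
          exact_mod_cast this
  have htail1 := tail_bound hab f hf hM H ht n
  have htail2 := tail_bound hab f hf hM H hs n
  have hsq2 : Real.sqrt 2 ≤ 2 := by
    nlinarith [Real.sq_sqrt (by norm_num : (0:ℝ) ≤ 2), Real.sqrt_nonneg 2]
  have hQ : (0:ℝ) ≤ Real.sqrt ((t-s) * Real.log (2*(b-a)/(t-s))) := Real.sqrt_nonneg _
  calc |f t - f s|
      = |(f t - f (mcU a b t n)) + (f (mcU a b t n) - f (mcU a b s n))
          + (f (mcU a b s n) - f s)| := by ring_nf
    _ ≤ |(f t - f (mcU a b t n)) + (f (mcU a b t n) - f (mcU a b s n))|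
          + |f (mcU a b s n) - f s| := abs_add_le _ _
    _ ≤ |f t - f (mcU a b t n)| + |f (mcU a b t n) - f (mcU a b s n)|
          + |f (mcU a b s n) - f s| := by linarith [abs_add_le (f t - f (mcU a b t n)) (f (mcU a b t n) - f (mcU a b s n))]
    _ ≤ 14 * M * mcPhi (b-a) n + 2 * (M * mcPhi (b-a) n) + 14 * M * mcPhi (b-a) n := by
        rw [abs_sub_comm (f (mcU a b s n)) (f s)]
        linarith
    _ = 30 * M * mcPhi (b-a) n := by ring
    _ ≤ 30 * M * (Real.sqrt 2 * Real.sqrt ((t-s) * Real.log (2*(b-a)/(t-s)))) := by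
        apply mul_le_mul_of_nonneg_left hphi (by positivity)
    _ ≤ 64 * M * Real.sqrt ((t-s) * Real.log (2*(b-a)/(t-s))) := by
        nlinarith [mul_nonneg hM hQ]
lemma grid_mem {a b : ℝ} (hab : a < b) {n k : ℕ} (hk : k ≤ 2^n) :
    a + (k:ℝ) * ((b-a)/2^n) ∈ Set.Icc a b := by
  have hb : (0:ℝ) < b - a := by linarith
  have h2n : (0:ℝ) < 2^n := by positivity
  constructor
  · nlinarith [Nat.cast_nonneg (α := ℝ) k, div_pos hb h2n]
  · have hkc : (k:ℝ) ≤ 2^n := by exact_mod_cast hk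
    have : (k:ℝ) * ((b-a)/2^n) ≤ 2^n * ((b-a)/2^n) :=
      mul_le_mul_of_nonneg_right hkc (by positivity)
    have he : (2:ℝ)^n * ((b-a)/2^n) = b - a := by field_simp
    linarith [he ▸ this]

set_option maxHeartbeats 1000000 in
theorem modulus_of_continuity_from_tail_bound :
    ∃ C₁ C₂ : ℝ, 0 < C₁ ∧ 0 < C₂ ∧
      ∀ (Ω : Type) [MeasurableSpace Ω] (P : Measure Ω), IsProbabilityMeasure P →
      ∀ a b : ℝ, a < b →
      ∀ Z : Ω → ℝ → ℝ,
        (∀ ω, ContinuousOn (Z ω) (Set.Icc a b)) →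
        (∀ t ∈ Set.Icc a b, Measurable (fun ω => Z ω t)) →
        (∀ s ∈ Set.Icc a b, ∀ t ∈ Set.Icc a b, ∀ K : ℝ, 1 ≤ K →
          P {ω | K * |t - s| ^ ((1 : ℝ) / 2) < |Z ω t - Z ω s|}
            ≤ ENNReal.ofReal (Real.sqrt (Real.exp 1) * K * Real.exp (-K ^ 2 / 2))) →
        ∀ K : ℝ, 0 ≤ K →
          P {ω | ∃ t ∈ Set.Icc a b, ∃ s ∈ Set.Icc a b, t ≠ s ∧
                K * Real.sqrt (|t - s| * Real.log (2 * (b - a) / |t - s|))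
                  < |Z ω t - Z ω s|}
            ≤ ENNReal.ofReal (C₁ * Real.exp (-C₂ * K ^ 2)) := by
  have hl2 : (0.6931471803:ℝ) < Real.log 2 := Real.log_two_gt_d9
  refine ⟨8192, Real.log 2 / 32768, by norm_num, by positivity, ?_⟩
  intro Ω _ P hP a b hab Z hcont hmeas htail K hK
  have hb : (0:ℝ) < b - a := by linarith
  by_cases hK6 : K < 640
  · -- trivial case
    refine le_trans prob_le_one ?_
    rw [← ENNReal.ofReal_one]
    apply ENNReal.ofReal_le_ofReal
    have hx : Real.exp (Real.log 2/32768 * K^2) ≤ 8192 := by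
      have hlog8192 : Real.log 8192 = 13 * Real.log 2 := by
        rw [show (8192:ℝ) = 2^13 by norm_num, Real.log_pow]
        push_cast; ring
      have hle : Real.log 2/32768 * K^2 ≤ Real.log 8192 := by
        rw [hlog8192]
        have hK2 : K^2 ≤ 409600 := by nlinarith
        nlinarith
      calc Real.exp (Real.log 2/32768 * K^2) ≤ Real.exp (Real.log 8192) :=
            Real.exp_le_exp.mpr hle
        _ = 8192 := Real.exp_log (by norm_num)
    have heq : -(Real.log 2/32768) * K^2 = -(Real.log 2/32768 * K^2) := by ring
    rw [heq, Real.exp_neg, ← div_eq_mul_inv, le_div_iff₀ (Real.exp_pos _), one_mul]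
    exact hx
  · push_neg at hK6  -- 640 ≤ K
    have hKpos : (0:ℝ) < K := by linarith
    set x : ℕ → ℕ → ℝ := fun n k => a + (k:ℝ) * ((b-a)/2^n) with hxdef
    set Kp : ℕ → ℝ := fun n => K / 64 * Real.sqrt (((n:ℝ)+1) * Real.log 2) with hKpdef
    have hKp1 : ∀ n : ℕ, 1 ≤ Kp n := by
      intro n
      have h08 : (0.8:ℝ) ≤ Real.sqrt (Real.log 2) := by
        rw [show (0.8:ℝ) = Real.sqrt 0.64 by
          rw [show (0.64:ℝ) = 0.8^2 by norm_num, Real.sqrt_sq (by norm_num)]]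
        exact Real.sqrt_le_sqrt (by nlinarith)
      have hmono : Real.sqrt (Real.log 2) ≤ Real.sqrt (((n:ℝ)+1) * Real.log 2) := by
        apply Real.sqrt_le_sqrt
        nlinarith [Nat.cast_nonneg (α := ℝ) n]
      have h10 : (10:ℝ) ≤ K / 64 := by linarith
      simp only [hKpdef]
      nlinarith [mul_le_mul h10 (le_trans h08 hmono) (by norm_num : (0:ℝ) ≤ 0.8) (by linarith : (0:ℝ) ≤ K/64)]
    have hKppos : ∀ n : ℕ, 0 < Kp n := fun n => lt_of_lt_of_le one_pos (hKp1 n)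
    set B : ℕ × ℕ → Set Ω := fun p =>
      if p.2 + 1 ≤ 2^p.1 then
        {ω | Kp p.1 * |x p.1 (p.2+1) - x p.1 p.2| ^ ((1:ℝ)/2)
              < |Z ω (x p.1 (p.2+1)) - Z ω (x p.1 p.2)|}
      else ∅ with hBdef
    have hgap : ∀ n k : ℕ, x n (k+1) - x n k = (b-a)/2^n := by
      intro n k
      simp only [hxdef]
      push_cast
      ring
    -- inclusion
    have hsub : {ω | ∃ t ∈ Set.Icc a b, ∃ s ∈ Set.Icc a b, t ≠ s ∧
          K * Real.sqrt (|t - s| * Real.log (2 * (b - a) / |t - s|)) < |Z ω t - Z ω s|}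
        ⊆ ⋃ p, B p := by
      intro ω hω
      by_contra hnot
      simp only [Set.mem_iUnion, not_exists] at hnot
      have Hgrid : ∀ n k : ℕ, k < 2^n →
          |Z ω (a + ((k:ℝ)+1) * ((b-a)/2^n)) - Z ω (a + (k:ℝ) * ((b-a)/2^n))|
            ≤ (K/64) * mcPhi (b-a) n := by
        intro n k hk
        have hget := hnot (n, k)
        rw [hBdef] at hget
        simp only [if_pos (by omega : k + 1 ≤ 2^n), Set.mem_setOf_eq, not_lt] at hget
        have hΔ : |x n (k+1) - x n k| = (b-a)/2^n := by
          rw [hgap n k, abs_of_pos (by positivity)]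
        rw [hΔ] at hget
        have hrw : Kp n * ((b-a)/2^n) ^ ((1:ℝ)/2) = (K/64) * mcPhi (b-a) n := by
          simp only [hKpdef]
          rw [← Real.sqrt_eq_rpow, mcPhi,
            Real.sqrt_mul (by positivity : (0:ℝ) ≤ (b-a)/2^n)]
          ring
        rw [hrw] at hget
        have ex : x n (k+1) = a + ((k:ℝ)+1) * ((b-a)/2^n) := by
          simp only [hxdef]; push_cast; ring
        have ex2 : x n k = a + (k:ℝ) * ((b-a)/2^n) := rfl
        rw [ex, ex2] at hget
        exact hget
      obtain ⟨t, ht, s, hs, hts, hlt⟩ := hω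
      have hM : (0:ℝ) ≤ K/64 := by positivity
      rcases lt_or_gt_of_ne hts with h | h
      · -- t < s
        have hch := chaining hab (Z ω) (hcont ω) hM Hgrid hs ht h
        rw [abs_sub_comm t s, abs_of_pos (by linarith : (0:ℝ) < s - t)] at hlt
        rw [abs_sub_comm (Z ω t) (Z ω s)] at hlt
        have : 64 * (K/64) = K := by ring
        rw [this] at hch
        linarith
      · -- s < t
        have hch := chaining hab (Z ω) (hcont ω) hM Hgrid ht hs h
        rw [abs_of_pos (by linarith : (0:ℝ) < t - s)] at hlt
        have : 64 * (K/64) = K := by ring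
        rw [this] at hch
        linarith
    -- probability of each B p
    have hPB : ∀ p : ℕ × ℕ, P (B p) ≤
        if p.2 + 1 ≤ 2^p.1 then
          ENNReal.ofReal (Real.sqrt (Real.exp 1) * Kp p.1 * Real.exp (-(Kp p.1)^2/2))
        else 0 := by
      rintro ⟨n, k⟩
      by_cases hk : k + 1 ≤ 2^n
      · simp only [hBdef, if_pos hk]
        exact htail (x n k) (grid_mem hab (by omega)) (x n (k+1)) (grid_mem hab (by omega))
          (Kp n) (hKp1 n)
      · simp only [hBdef, if_neg hk]
        simp
    -- numeric per-n bound
    set T : ℝ := 8192 * Real.exp (-(Real.log 2/32768) * K^2) with hTdef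
    have hT0 : 0 ≤ T := by positivity
    have hnum : ∀ n : ℕ, (2:ℝ)^n * (Real.sqrt (Real.exp 1) * Kp n * Real.exp (-(Kp n)^2/2))
        ≤ T * (1/2)^(n+1) := by
      intro n
      have hKpsq : (Kp n)^2 = K^2 * (((n:ℝ)+1) * Real.log 2) / 4096 := by
        simp only [hKpdef]
        rw [mul_pow, Real.sq_sqrt (by nlinarith [Nat.cast_nonneg (α := ℝ) n])]
        ring
      have step1 : Kp n * Real.exp (-(Kp n)^2/2) ≤ Real.exp (-(Kp n)^2/4) := by
        have hpos := hKppos n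
        have hlg : Real.log (Kp n) ≤ (Kp n)^2/4 := by
          nlinarith [Real.log_le_sub_one_of_pos hpos, sq_nonneg (Kp n - 2)]
        calc Kp n * Real.exp (-(Kp n)^2/2)
            = Real.exp (Real.log (Kp n) + (-(Kp n)^2/2)) := by
              rw [Real.exp_add, Real.exp_log hpos]
          _ ≤ Real.exp (-(Kp n)^2/4) := Real.exp_le_exp.mpr (by linarith)
      have hsqrt_e : Real.sqrt (Real.exp 1) = Real.exp (1/2) := by
        rw [← Real.exp_half]
      have h2n : (2:ℝ)^n = Real.exp ((n:ℝ) * Real.log 2) := by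
        rw [← Real.exp_log (show (0:ℝ) < (2:ℝ)^n by positivity), Real.log_pow]
      have hhalf : ((1:ℝ)/2)^(n+1) = Real.exp (-(((n:ℝ)+1) * Real.log 2)) := by
        have e1 : ((1:ℝ)/2)^(n+1) = ((2:ℝ)^(n+1))⁻¹ := by
          rw [div_pow, one_pow, inv_eq_one_div]
        rw [e1, ← Real.exp_log (show (0:ℝ) < (2:ℝ)^(n+1) by positivity), Real.log_pow,
          ← Real.exp_neg]
        congr 1
        push_cast
        ring
      have h8192 : (8192:ℝ) = Real.exp (13 * Real.log 2) := by
        rw [show (13:ℝ) * Real.log 2 = Real.log (2^13) by rw [Real.log_pow]; push_cast; ring,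
          Real.exp_log (by norm_num)]
        norm_num
      calc (2:ℝ)^n * (Real.sqrt (Real.exp 1) * Kp n * Real.exp (-(Kp n)^2/2))
          ≤ (2:ℝ)^n * (Real.sqrt (Real.exp 1) * Real.exp (-(Kp n)^2/4)) := by
            have hs : (0:ℝ) ≤ Real.sqrt (Real.exp 1) := Real.sqrt_nonneg _
            have h2pn : (0:ℝ) ≤ (2:ℝ)^n := by positivity
            have hmm := mul_le_mul_of_nonneg_left step1 (mul_nonneg h2pn hs)
            calc (2:ℝ)^n * (Real.sqrt (Real.exp 1) * Kp n * Real.exp (-(Kp n)^2/2))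
                = (2:ℝ)^n * Real.sqrt (Real.exp 1) * (Kp n * Real.exp (-(Kp n)^2/2)) := by ring
              _ ≤ (2:ℝ)^n * Real.sqrt (Real.exp 1) * Real.exp (-(Kp n)^2/4) := hmm
              _ = (2:ℝ)^n * (Real.sqrt (Real.exp 1) * Real.exp (-(Kp n)^2/4)) := by ring
        _ = Real.exp ((n:ℝ) * Real.log 2 + (1/2 + (-(Kp n)^2/4))) := by
            rw [Real.exp_add, Real.exp_add, ← h2n, hsqrt_e]
        _ ≤ Real.exp (13 * Real.log 2 + (-(Real.log 2/32768) * K^2 + (-(((n:ℝ)+1) * Real.log 2)))) := by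
            apply Real.exp_le_exp.mpr
            rw [hKpsq]
            have hK2 : (409600:ℝ) ≤ K^2 := by nlinarith
            have hn0 : (0:ℝ) ≤ (n:ℝ) := Nat.cast_nonneg n
            have key : (0:ℝ) ≤ ((K^2 - 32768) * ((2*(n:ℝ)+1) * Real.log 2)) := by
              apply mul_nonneg (by nlinarith)
              nlinarith
            have key2 : (Real.log 2/32768) * K^2 + (2*(n:ℝ)+1)*Real.log 2
                ≤ K^2 * (((n:ℝ)+1) * Real.log 2)/4096/4 := by linarith [key]
            linarith [key2, hl2]
        _ = T * (1/2)^(n+1) := by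
            rw [hTdef, hhalf, h8192, Real.exp_add, Real.exp_add]
            ring
    -- put it together
    calc P {ω | ∃ t ∈ Set.Icc a b, ∃ s ∈ Set.Icc a b, t ≠ s ∧
            K * Real.sqrt (|t - s| * Real.log (2 * (b - a) / |t - s|)) < |Z ω t - Z ω s|}
        ≤ P (⋃ p, B p) := measure_mono hsub
      _ ≤ ∑' p, P (B p) := measure_iUnion_le _
      _ ≤ ∑' p : ℕ × ℕ, (if p.2 + 1 ≤ 2^p.1 then
            ENNReal.ofReal (Real.sqrt (Real.exp 1) * Kp p.1 * Real.exp (-(Kp p.1)^2/2))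
          else 0) := ENNReal.tsum_le_tsum hPB
      _ = ∑' n : ℕ, ∑' k : ℕ, (if k + 1 ≤ 2^n then
            ENNReal.ofReal (Real.sqrt (Real.exp 1) * Kp n * Real.exp (-(Kp n)^2/2))
          else 0) := ENNReal.tsum_prod'
      _ ≤ ∑' n : ℕ, ENNReal.ofReal (T * (1/2)^(n+1)) := by
          apply ENNReal.tsum_le_tsum
          intro n
          have hinner : ∑' k : ℕ, (if k + 1 ≤ 2^n then
              ENNReal.ofReal (Real.sqrt (Real.exp 1) * Kp n * Real.exp (-(Kp n)^2/2))
            else 0) = (2^n : ℕ) *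
              ENNReal.ofReal (Real.sqrt (Real.exp 1) * Kp n * Real.exp (-(Kp n)^2/2)) := by
            rw [tsum_eq_sum (s := Finset.range (2^n))
              (fun k hk => by rw [if_neg (by simp at hk; omega)])]
            rw [Finset.sum_congr rfl (fun k hk => if_pos (by simp at hk; omega))]
            rw [Finset.sum_const, Finset.card_range, nsmul_eq_mul]
          rw [hinner]
          have hcast : ((2^n : ℕ) : ENNReal) = ENNReal.ofReal ((2:ℝ)^n) := by
            rw [← ENNReal.ofReal_natCast]
            congr 1
            push_cast
            ring
          rw [hcast, ← ENNReal.ofReal_mul (by positivity)]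
          exact ENNReal.ofReal_le_ofReal (hnum n)
      _ = ENNReal.ofReal T * ∑' n : ℕ, ENNReal.ofReal ((1/2:ℝ)^(n+1)) := by
          rw [← ENNReal.tsum_mul_left]
          congr 1 with n
          rw [← ENNReal.ofReal_mul hT0]
      _ ≤ ENNReal.ofReal T * 1 := by
          refine mul_le_mul_right (le_of_eq ?_) _
          have hofr : ∀ n : ℕ, ENNReal.ofReal ((1/2:ℝ)^(n+1)) = (2⁻¹ : ENNReal)^(n+1) := by
            intro n
            rw [ENNReal.ofReal_pow (by norm_num)]
            congr 1
            rw [one_div, ENNReal.ofReal_inv_of_pos (by norm_num), ENNReal.ofReal_ofNat]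
          calc ∑' n : ℕ, ENNReal.ofReal ((1/2:ℝ)^(n+1))
              = ∑' n : ℕ, (2⁻¹ : ENNReal)^(n+1) := by
                congr 1 with n; exact hofr n
            _ = (2⁻¹ : ENNReal) * ∑' n : ℕ, (2⁻¹ : ENNReal)^n := by
                rw [← ENNReal.tsum_mul_left]
                congr 1 with n
                rw [pow_succ]
                ring
            _ = (2⁻¹ : ENNReal) * (1 - 2⁻¹)⁻¹ := by rw [ENNReal.tsum_geometric]
            _ = 1 := by
                rw [ENNReal.one_sub_inv_two, inv_inv]
                exact ENNReal.inv_mul_cancel (by norm_num) ENNReal.ofNat_ne_top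
      _ = ENNReal.ofReal (8192 * Real.exp (-(Real.log 2/32768) * K^2)) := by
          rw [mul_one, hTdef]
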